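/- If n ≥ 2 is even, then there is a W-algebra isomorphism from R_n/I_n to the polynomial ring (R_{n−1}/I_{n−1})[X] in one variable over R_{n−1}/I_{n−1}, sending the class of the variable X of R_n to the polynomial variable X and the class of each variable P_i, B_J, T_J of R_n to the class of the variable of the same name in R_{n−1}/I_{n−1} (these variables agree since r(n) = r(n−1) for n even). Moreover, the induced map Φ̄_n : R_n/I_n → R_{n−1}/I_{n−1} is surjective. (Lemma 3.18 of the paper.) -/

import Mathlib

open MvPolynomial

/-- `r(n) = ⌊(n−1)/2⌋`, the largest index of a Pontryagin-class variable in `R_n`. -/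
def rr (n : ℕ) : ℕ := (n - 1) / 2

/-- The index type of the variables of the polynomial `W`-algebra `R_n` (with `r = r(n)`):
the Pontryagin variables `P_i` (`1 ≤ i ≤ r`), the Euler variable `X`, the Bockstein
variables `B_J` for nonempty `J ⊆ {1,…,r}`, and the twisted Bockstein variables `T_J`
for `J ⊆ {1,…,r}` (including `T_∅`). -/
abbrev GVar (r : ℕ) : Type :=
  {i : ℕ // 1 ≤ i ∧ i ≤ r} ⊕
    (Unit ⊕ ({J : Finset ℕ // J ⊆ Finset.Icc 1 r ∧ J.Nonempty} ⊕
      {J : Finset ℕ // J ⊆ Finset.Icc 1 r}))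

/-- The polynomial `W`-algebra `R_n` on the variables above, for `r = r(n)`. -/
abbrev Rg (W : Type) [CommRing W] (r : ℕ) : Type := MvPolynomial (GVar r) W

variable (W : Type) [CommRing W]

/-- The variable `P_i` (zero if `i` is out of range). -/
noncomputable def Pv (r : ℕ) (i : ℕ) : Rg W r :=
  if h : 1 ≤ i ∧ i ≤ r then X (Sum.inl ⟨i, h⟩) else 0

/-- The variable `X`. -/
noncomputable def Xv (r : ℕ) : Rg W r := X (Sum.inr (Sum.inl ()))

/-- The variable `B_J`, with the convention `B_∅ = 0` (and zero if `J ⊄ {1,…,r}`). -/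
noncomputable def Bv (r : ℕ) (J : Finset ℕ) : Rg W r :=
  if h : J ⊆ Finset.Icc 1 r ∧ J.Nonempty then X (Sum.inr (Sum.inr (Sum.inl ⟨J, h⟩))) else 0

/-- The variable `T_J` (zero if `J ⊄ {1,…,r}`). -/
noncomputable def Tv (r : ℕ) (J : Finset ℕ) : Rg W r :=
  if h : J ⊆ Finset.Icc 1 r then X (Sum.inr (Sum.inr (Sum.inr ⟨J, h⟩))) else 0

/-- `P_A = ∏_{a ∈ A} P_a`. -/
noncomputable def PP (r : ℕ) (A : Finset ℕ) : Rg W r := ∏ a ∈ A, Pv W r a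

/-- Symmetric difference `Δ(A,B) = (A ∪ B) ∖ (A ∩ B)`. -/
def sdiff' (A B : Finset ℕ) : Finset ℕ := (A ∪ B) \ (A ∩ B)

/-- The generating set of the ideal `I_n ⊆ R_n`:
(1) `w·B_J`, `w·T_J` for `w ∈ I`;
(2) `X − T_{{(n−1)/2}}` if `n ≥ 3` is odd, and `X − T_∅` if `n = 1`;
(3) the four families of quadratic relations among the Bockstein classes. -/
def relSet (Iid : Ideal W) (n : ℕ) : Set (Rg W (rr n)) :=
  {f | ∃ w ∈ Iid, ∃ J : Finset ℕ,
      f = C w * Bv W (rr n) J ∨ f = C w * Tv W (rr n) J} ∪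
  {f | (n % 2 = 1 ∧ 3 ≤ n ∧ f = Xv W (rr n) - Tv W (rr n) {(n - 1) / 2}) ∨
       (n = 1 ∧ f = Xv W (rr n) - Tv W (rr n) ∅)} ∪
  {f | ∃ J J' : Finset ℕ, J ⊆ Finset.Icc 1 (rr n) ∧ J' ⊆ Finset.Icc 1 (rr n) ∧ J.Nonempty ∧
      (f = Bv W (rr n) J * Bv W (rr n) J' -
            ∑ k ∈ J, Bv W (rr n) {k} * PP W (rr n) ((J.erase k) ∩ J') *
              Bv W (rr n) (sdiff' (J.erase k) J') ∨
       f = Bv W (rr n) J * Tv W (rr n) J' -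
            ∑ k ∈ J, Bv W (rr n) {k} * PP W (rr n) ((J.erase k) ∩ J') *
              Tv W (rr n) (sdiff' (J.erase k) J') ∨
       f = Tv W (rr n) J * Bv W (rr n) J' - Bv W (rr n) J * Tv W (rr n) J' -
            Tv W (rr n) ∅ * PP W (rr n) (J ∩ J') * Bv W (rr n) (sdiff' J J') ∨
       f = Tv W (rr n) J * Tv W (rr n) J' - Bv W (rr n) J * Bv W (rr n) J' -
            Tv W (rr n) ∅ * PP W (rr n) (J ∩ J') * Tv W (rr n) (sdiff' J J'))}

/-- The ideal `I_n ⊆ R_n`. -/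
noncomputable def relIdeal (Iid : Ideal W) (n : ℕ) : Ideal (Rg W (rr n)) :=
  Ideal.span (relSet W Iid n)

/-- The value of `Φ_n` on the variables of `R_n`: `X ↦ 0`;
`P_i ↦ P_i` except `P_{(n−1)/2} ↦ X²` when `n` is odd;
`B_J ↦ B_J` and `T_J ↦ T_J` when `(n−1)/2 ∉ J` (or `n` is even), while for `n` odd and
`J = J′ ⊔ {(n−1)/2}` one has `B_J ↦ T_{J′}·X` and `T_J ↦ B_{J′}·X`. -/
noncomputable def phiVar (n : ℕ) : GVar (rr n) → Rg W (rr (n - 1))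
  | Sum.inl p =>
      if n % 2 = 1 ∧ p.1 = (n - 1) / 2 then (Xv W (rr (n - 1))) ^ 2
      else Pv W (rr (n - 1)) p.1
  | Sum.inr (Sum.inl _) => 0
  | Sum.inr (Sum.inr (Sum.inl p)) =>
      if n % 2 = 1 ∧ (n - 1) / 2 ∈ p.1 then
        Tv W (rr (n - 1)) (p.1.erase ((n - 1) / 2)) * Xv W (rr (n - 1))
      else Bv W (rr (n - 1)) p.1
  | Sum.inr (Sum.inr (Sum.inr p)) =>
      if n % 2 = 1 ∧ (n - 1) / 2 ∈ p.1 then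
        Bv W (rr (n - 1)) (p.1.erase ((n - 1) / 2)) * Xv W (rr (n - 1))
      else Tv W (rr (n - 1)) p.1

/-- The `W`-algebra homomorphism `Φ_n : R_n → R_{n−1}`. -/
noncomputable def Phi (n : ℕ) : Rg W (rr n) →ₐ[W] Rg W (rr (n - 1)) :=
  aeval (phiVar W n)

namespace L318

variable {W : Type} [CommRing W]

/-- The subset appearing in relation (2) at level `n-1` (for `n` even). -/
def kset (n : ℕ) : Finset ℕ := if n = 2 then ∅ else {(n - 2) / 2}

noncomputable def fvar (Iid : Ideal W) (n : ℕ) :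
    GVar (rr n) → Polynomial (Rg W (rr (n - 1)) ⧸ relIdeal W Iid (n - 1))
  | Sum.inl p => Polynomial.C (Ideal.Quotient.mk _ (Pv W (rr (n - 1)) p.1))
  | Sum.inr (Sum.inl _) => Polynomial.X
  | Sum.inr (Sum.inr (Sum.inl p)) => Polynomial.C (Ideal.Quotient.mk _ (Bv W (rr (n - 1)) p.1))
  | Sum.inr (Sum.inr (Sum.inr p)) => Polynomial.C (Ideal.Quotient.mk _ (Tv W (rr (n - 1)) p.1))

noncomputable def Fmap (Iid : Ideal W) (n : ℕ) :
    Rg W (rr n) →ₐ[W] Polynomial (Rg W (rr (n - 1)) ⧸ relIdeal W Iid (n - 1)) :=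
  aeval (fvar Iid n)

variable (Iid : Ideal W) (n : ℕ)

lemma F_X : Fmap Iid n (Xv W (rr n)) = Polynomial.X := by
  simp [Fmap, Xv, fvar]

lemma F_C (w : W) :
    Fmap Iid n (C w) = Polynomial.C (Ideal.Quotient.mk _ (C w : Rg W (rr (n - 1)))) := by
  rw [show (C w : Rg W (rr n)) = algebraMap W _ w from (algebraMap_eq W _).symm ▸ rfl]
  rw [AlgHom.commutes, Polynomial.algebraMap_apply, ← Ideal.Quotient.mk_algebraMap,
    MvPolynomial.algebraMap_eq]

lemma F_P (h : rr n = rr (n - 1)) (i : ℕ) :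
    Fmap Iid n (Pv W (rr n) i) =
      Polynomial.C (Ideal.Quotient.mk _ (Pv W (rr (n - 1)) i)) := by
  by_cases hc : 1 ≤ i ∧ i ≤ rr n
  · rw [Pv, dif_pos hc]; simp [Fmap, fvar]
  · rw [Pv, dif_neg hc, map_zero,
      show Pv W (rr (n - 1)) i = 0 from by rw [Pv, dif_neg (by rw [← h]; exact hc)],
      map_zero, Polynomial.C_0]

lemma F_B (h : rr n = rr (n - 1)) (J : Finset ℕ) :
    Fmap Iid n (Bv W (rr n) J) =
      Polynomial.C (Ideal.Quotient.mk _ (Bv W (rr (n - 1)) J)) := by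
  by_cases hc : J ⊆ Finset.Icc 1 (rr n) ∧ J.Nonempty
  · rw [Bv, dif_pos hc]; simp [Fmap, fvar]
  · rw [Bv, dif_neg hc, map_zero,
      show Bv W (rr (n - 1)) J = 0 from by rw [Bv, dif_neg (by rw [← h]; exact hc)],
      map_zero, Polynomial.C_0]

lemma F_T (h : rr n = rr (n - 1)) (J : Finset ℕ) :
    Fmap Iid n (Tv W (rr n) J) =
      Polynomial.C (Ideal.Quotient.mk _ (Tv W (rr (n - 1)) J)) := by
  by_cases hc : J ⊆ Finset.Icc 1 (rr n)
  · rw [Tv, dif_pos hc]; simp [Fmap, fvar]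
  · rw [Tv, dif_neg hc, map_zero,
      show Tv W (rr (n - 1)) J = 0 from by rw [Tv, dif_neg (by rw [← h]; exact hc)],
      map_zero, Polynomial.C_0]

lemma F_PP (h : rr n = rr (n - 1)) (A : Finset ℕ) :
    Fmap Iid n (PP W (rr n) A) =
      Polynomial.C (Ideal.Quotient.mk _ (PP W (rr (n - 1)) A)) := by
  rw [PP, PP, map_prod, map_prod, map_prod]
  exact Finset.prod_congr rfl fun a _ => F_P Iid n h a

end L318
namespace L318
variable {W : Type} [CommRing W] (Iid : Ideal W) (n : ℕ)

lemma rr_eq (hn : 2 ≤ n) (hev : n % 2 = 0) : rr n = rr (n - 1) := by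
  unfold rr; omega

lemma kset_subset (hn : 2 ≤ n) (hev : n % 2 = 0) :
    kset n ⊆ Finset.Icc 1 (rr n) := by
  unfold kset
  split_ifs with h2
  · exact Finset.empty_subset _
  · intro x hx
    simp only [Finset.mem_singleton] at hx
    subst hx
    simp only [Finset.mem_Icc, rr]
    omega

lemma rel2_mem (hn : 2 ≤ n) (hev : n % 2 = 0) :
    Xv W (rr (n - 1)) - Tv W (rr (n - 1)) (kset n) ∈ relSet W Iid (n - 1) := by
  left; right
  by_cases h2 : n = 2
  · right
    constructor
    · omega
    · rw [kset, if_pos h2]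
  · left
    refine ⟨by omega, by omega, ?_⟩
    rw [kset, if_neg h2, show n - 1 - 1 = n - 2 by omega]

lemma F_vanish (hn : 2 ≤ n) (hev : n % 2 = 0) :
    ∀ f ∈ relSet W Iid n, Fmap Iid n f = 0 := by
  have h := rr_eq n hn hev
  intro f hf
  rcases hf with ((⟨w, hw, J, hJ⟩ | hf2) | ⟨J, J', hJ, hJ', hne, hcases⟩)
  · have hz : ∀ g : Rg W (rr (n - 1)), g ∈ relSet W Iid (n - 1) →
        Polynomial.C (Ideal.Quotient.mk (relIdeal W Iid (n - 1)) g) = 0 := by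
      intro g hg
      have hz0 : Ideal.Quotient.mk (relIdeal W Iid (n - 1)) g = 0 :=
        Ideal.Quotient.eq_zero_iff_mem.2
          (show g ∈ relIdeal W Iid (n - 1) from Ideal.subset_span hg)
      rw [hz0, Polynomial.C_0]
    rcases hJ with rfl | rfl
    · rw [map_mul, F_C, F_B Iid n h, ← Polynomial.C_mul, ← map_mul]
      exact hz _ (Or.inl (Or.inl ⟨w, hw, J, Or.inl rfl⟩))
    · rw [map_mul, F_C, F_T Iid n h, ← Polynomial.C_mul, ← map_mul]
      exact hz _ (Or.inl (Or.inl ⟨w, hw, J, Or.inr rfl⟩))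
  · exfalso
    rcases hf2 with ⟨h1, _⟩ | ⟨h1, _⟩ <;> omega
  · have hz : ∀ g : Rg W (rr (n - 1)), g ∈ relSet W Iid (n - 1) →
        Polynomial.C (Ideal.Quotient.mk (relIdeal W Iid (n - 1)) g) = 0 := by
      intro g hg
      have hz0 : Ideal.Quotient.mk (relIdeal W Iid (n - 1)) g = 0 :=
        Ideal.Quotient.eq_zero_iff_mem.2
          (show g ∈ relIdeal W Iid (n - 1) from Ideal.subset_span hg)
      rw [hz0, Polynomial.C_0]
    have hJm : J ⊆ Finset.Icc 1 (rr (n - 1)) := by rw [← h]; exact hJ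
    have hJ'm : J' ⊆ Finset.Icc 1 (rr (n - 1)) := by rw [← h]; exact hJ'
    rcases hcases with rfl | rfl | rfl | rfl
    · calc Fmap Iid n _ = Polynomial.C (Ideal.Quotient.mk (relIdeal W Iid (n - 1))
          (Bv W (rr (n - 1)) J * Bv W (rr (n - 1)) J' -
            ∑ k ∈ J, Bv W (rr (n - 1)) {k} * PP W (rr (n - 1)) ((J.erase k) ∩ J') *
              Bv W (rr (n - 1)) (sdiff' (J.erase k) J'))) := by
            simp only [map_sub, map_mul, map_sum, F_B Iid n h, F_PP Iid n h]
        _ = 0 := hz _ (Or.inr ⟨J, J', hJm, hJ'm, hne, Or.inl rfl⟩)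
    · calc Fmap Iid n _ = Polynomial.C (Ideal.Quotient.mk (relIdeal W Iid (n - 1))
          (Bv W (rr (n - 1)) J * Tv W (rr (n - 1)) J' -
            ∑ k ∈ J, Bv W (rr (n - 1)) {k} * PP W (rr (n - 1)) ((J.erase k) ∩ J') *
              Tv W (rr (n - 1)) (sdiff' (J.erase k) J'))) := by
            simp only [map_sub, map_mul, map_sum, F_B Iid n h, F_T Iid n h, F_PP Iid n h]
        _ = 0 := hz _ (Or.inr ⟨J, J', hJm, hJ'm, hne, Or.inr (Or.inl rfl)⟩)
    · calc Fmap Iid n _ = Polynomial.C (Ideal.Quotient.mk (relIdeal W Iid (n - 1))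
          (Tv W (rr (n - 1)) J * Bv W (rr (n - 1)) J' - Bv W (rr (n - 1)) J * Tv W (rr (n - 1)) J' -
            Tv W (rr (n - 1)) ∅ * PP W (rr (n - 1)) (J ∩ J') *
              Bv W (rr (n - 1)) (sdiff' J J'))) := by
            simp only [map_sub, map_mul, F_B Iid n h, F_T Iid n h, F_PP Iid n h]
        _ = 0 := hz _ (Or.inr ⟨J, J', hJm, hJ'm, hne, Or.inr (Or.inr (Or.inl rfl))⟩)
    · calc Fmap Iid n _ = Polynomial.C (Ideal.Quotient.mk (relIdeal W Iid (n - 1))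
          (Tv W (rr (n - 1)) J * Tv W (rr (n - 1)) J' - Bv W (rr (n - 1)) J * Bv W (rr (n - 1)) J' -
            Tv W (rr (n - 1)) ∅ * PP W (rr (n - 1)) (J ∩ J') *
              Tv W (rr (n - 1)) (sdiff' J J'))) := by
            simp only [map_sub, map_mul, F_B Iid n h, F_T Iid n h, F_PP Iid n h]
        _ = 0 := hz _ (Or.inr ⟨J, J', hJm, hJ'm, hne, Or.inr (Or.inr (Or.inr rfl))⟩)

end L318
namespace L318
variable {W : Type} [CommRing W]

noncomputable def gvar (Iid : Ideal W) (n : ℕ) :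
    GVar (rr (n - 1)) → (Rg W (rr n) ⧸ relIdeal W Iid n)
  | Sum.inl p => Ideal.Quotient.mk _ (Pv W (rr n) p.1)
  | Sum.inr (Sum.inl _) => Ideal.Quotient.mk _ (Tv W (rr n) (kset n))
  | Sum.inr (Sum.inr (Sum.inl p)) => Ideal.Quotient.mk _ (Bv W (rr n) p.1)
  | Sum.inr (Sum.inr (Sum.inr p)) => Ideal.Quotient.mk _ (Tv W (rr n) p.1)

noncomputable def Gmap0 (Iid : Ideal W) (n : ℕ) :
    Rg W (rr (n - 1)) →ₐ[W] (Rg W (rr n) ⧸ relIdeal W Iid n) :=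
  aeval (gvar Iid n)

variable (Iid : Ideal W) (n : ℕ)

lemma G_X : Gmap0 Iid n (Xv W (rr (n - 1))) = Ideal.Quotient.mk _ (Tv W (rr n) (kset n)) := by
  simp [Gmap0, Xv, gvar]

lemma G_C (w : W) :
    Gmap0 Iid n (C w) = Ideal.Quotient.mk _ (C w : Rg W (rr n)) := by
  rw [show (C w : Rg W (rr (n - 1))) = algebraMap W _ w from (algebraMap_eq W _).symm ▸ rfl]
  rw [AlgHom.commutes, ← Ideal.Quotient.mk_algebraMap, MvPolynomial.algebraMap_eq]

lemma G_P (h : rr n = rr (n - 1)) (i : ℕ) :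
    Gmap0 Iid n (Pv W (rr (n - 1)) i) = Ideal.Quotient.mk _ (Pv W (rr n) i) := by
  by_cases hc : 1 ≤ i ∧ i ≤ rr (n - 1)
  · rw [Pv, dif_pos hc]; simp [Gmap0, gvar]
  · rw [Pv, dif_neg hc, map_zero,
      show Pv W (rr n) i = 0 from by rw [Pv, dif_neg (by rw [h]; exact hc)], map_zero]

lemma G_B (h : rr n = rr (n - 1)) (J : Finset ℕ) :
    Gmap0 Iid n (Bv W (rr (n - 1)) J) = Ideal.Quotient.mk _ (Bv W (rr n) J) := by
  by_cases hc : J ⊆ Finset.Icc 1 (rr (n - 1)) ∧ J.Nonempty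
  · rw [Bv, dif_pos hc]; simp [Gmap0, gvar]
  · rw [Bv, dif_neg hc, map_zero,
      show Bv W (rr n) J = 0 from by rw [Bv, dif_neg (by rw [h]; exact hc)], map_zero]

lemma G_T (h : rr n = rr (n - 1)) (J : Finset ℕ) :
    Gmap0 Iid n (Tv W (rr (n - 1)) J) = Ideal.Quotient.mk _ (Tv W (rr n) J) := by
  by_cases hc : J ⊆ Finset.Icc 1 (rr (n - 1))
  · rw [Tv, dif_pos hc]; simp [Gmap0, gvar]
  · rw [Tv, dif_neg hc, map_zero,
      show Tv W (rr n) J = 0 from by rw [Tv, dif_neg (by rw [h]; exact hc)], map_zero]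

lemma G_PP (h : rr n = rr (n - 1)) (A : Finset ℕ) :
    Gmap0 Iid n (PP W (rr (n - 1)) A) = Ideal.Quotient.mk _ (PP W (rr n) A) := by
  rw [PP, PP, map_prod, map_prod]
  exact Finset.prod_congr rfl fun a _ => G_P Iid n h a

lemma G_vanish (hn : 2 ≤ n) (hev : n % 2 = 0) :
    ∀ f ∈ relSet W Iid (n - 1), Gmap0 Iid n f = 0 := by
  have h := rr_eq n hn hev
  have hz : ∀ g : Rg W (rr n), g ∈ relSet W Iid n →
      Ideal.Quotient.mk (relIdeal W Iid n) g = 0 := fun g hg =>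
    Ideal.Quotient.eq_zero_iff_mem.2
      (show g ∈ relIdeal W Iid n from Ideal.subset_span hg)
  intro f hf
  rcases hf with ((⟨w, hw, J, hJ⟩ | hf2) | ⟨J, J', hJ, hJ', hne, hcases⟩)
  · rcases hJ with rfl | rfl
    · rw [map_mul, G_C, G_B Iid n h, ← map_mul]
      exact hz _ (Or.inl (Or.inl ⟨w, hw, J, Or.inl rfl⟩))
    · rw [map_mul, G_C, G_T Iid n h, ← map_mul]
      exact hz _ (Or.inl (Or.inl ⟨w, hw, J, Or.inr rfl⟩))
  · have hfe : f = Xv W (rr (n - 1)) - Tv W (rr (n - 1)) (kset n) := by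
      rcases hf2 with ⟨h1, h3, rfl⟩ | ⟨h1, rfl⟩
      · rw [kset, if_neg (by omega), show n - 1 - 1 = n - 2 by omega]
      · rw [kset, if_pos (by omega)]
    subst hfe
    rw [map_sub, G_X, G_T Iid n h, sub_self]
  · have hJm : J ⊆ Finset.Icc 1 (rr n) := by rw [h]; exact hJ
    have hJ'm : J' ⊆ Finset.Icc 1 (rr n) := by rw [h]; exact hJ'
    rcases hcases with rfl | rfl | rfl | rfl
    · refine Eq.trans ?_ (hz _ (Or.inr ⟨J, J', hJm, hJ'm, hne, Or.inl rfl⟩))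
      simp only [map_sub, map_mul, map_sum, G_B Iid n h, G_PP Iid n h]
    · refine Eq.trans ?_ (hz _ (Or.inr ⟨J, J', hJm, hJ'm, hne, Or.inr (Or.inl rfl)⟩))
      simp only [map_sub, map_mul, map_sum, G_B Iid n h, G_T Iid n h, G_PP Iid n h]
    · refine Eq.trans ?_ (hz _ (Or.inr ⟨J, J', hJm, hJ'm, hne, Or.inr (Or.inr (Or.inl rfl))⟩))
      simp only [map_sub, map_mul, G_B Iid n h, G_T Iid n h, G_PP Iid n h]
    · refine Eq.trans ?_ (hz _ (Or.inr ⟨J, J', hJm, hJ'm, hne, Or.inr (Or.inr (Or.inr rfl))⟩))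
      simp only [map_sub, map_mul, G_B Iid n h, G_T Iid n h, G_PP Iid n h]

end L318
namespace L318
variable {W : Type} [CommRing W]

noncomputable def Fbar (Iid : Ideal W) (n : ℕ) (hn : 2 ≤ n) (hev : n % 2 = 0) :
    (Rg W (rr n) ⧸ relIdeal W Iid n) →ₐ[W]
      Polynomial (Rg W (rr (n - 1)) ⧸ relIdeal W Iid (n - 1)) :=
  Ideal.Quotient.liftₐ _ (Fmap Iid n) (fun a ha => by
    have hle : relIdeal W Iid n ≤ RingHom.ker (Fmap Iid n).toRingHom :=
      Ideal.span_le.2 fun f hf => F_vanish Iid n hn hev f hf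
    exact hle ha)

noncomputable def Gbar (Iid : Ideal W) (n : ℕ) (hn : 2 ≤ n) (hev : n % 2 = 0) :
    (Rg W (rr (n - 1)) ⧸ relIdeal W Iid (n - 1)) →ₐ[W]
      (Rg W (rr n) ⧸ relIdeal W Iid n) :=
  Ideal.Quotient.liftₐ _ (Gmap0 Iid n) (fun a ha => by
    have hle : relIdeal W Iid (n - 1) ≤ RingHom.ker (Gmap0 Iid n).toRingHom :=
      Ideal.span_le.2 fun f hf => G_vanish Iid n hn hev f hf
    exact hle ha)

noncomputable def Gm (Iid : Ideal W) (n : ℕ) (hn : 2 ≤ n) (hev : n % 2 = 0) :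
    Polynomial (Rg W (rr (n - 1)) ⧸ relIdeal W Iid (n - 1)) →ₐ[W]
      (Rg W (rr n) ⧸ relIdeal W Iid n) :=
  Polynomial.aevalTower (Gbar Iid n hn hev) (Ideal.Quotient.mk _ (Xv W (rr n)))

variable (Iid : Ideal W) (n : ℕ) (hn : 2 ≤ n) (hev : n % 2 = 0)

lemma Fbar_mk (a : Rg W (rr n)) :
    Fbar Iid n hn hev (Ideal.Quotient.mk _ a) = Fmap Iid n a := by
  rfl

lemma Gbar_mk (a : Rg W (rr (n - 1))) :
    Gbar Iid n hn hev (Ideal.Quotient.mk _ a) = Gmap0 Iid n a := by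
  rfl

lemma FG_var (v : GVar (rr (n - 1))) :
    Fbar Iid n hn hev (gvar Iid n v) =
      Polynomial.C (Ideal.Quotient.mk _ (X v : Rg W (rr (n - 1)))) := by
  have h := rr_eq n hn hev
  rcases v with p | u | p | p
  · show Fbar Iid n hn hev (Ideal.Quotient.mk _ (Pv W (rr n) p.1)) = _
    rw [Fbar_mk, F_P Iid n h]
    congr 1
    unfold Pv
    rw [dif_pos p.2]
  · show Fbar Iid n hn hev (Ideal.Quotient.mk _ (Tv W (rr n) (kset n))) = _
    rw [Fbar_mk, F_T Iid n h]
    congr 1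
    exact (Ideal.Quotient.eq.2 (Ideal.subset_span (rel2_mem Iid n hn hev))).symm
  · show Fbar Iid n hn hev (Ideal.Quotient.mk _ (Bv W (rr n) p.1)) = _
    rw [Fbar_mk, F_B Iid n h]
    congr 1
    unfold Bv
    rw [dif_pos p.2]
  · show Fbar Iid n hn hev (Ideal.Quotient.mk _ (Tv W (rr n) p.1)) = _
    rw [Fbar_mk, F_T Iid n h]
    congr 1
    unfold Tv
    rw [dif_pos p.2]

lemma FG_all (b : Rg W (rr (n - 1))) :
    Fbar Iid n hn hev (Gmap0 Iid n b) =
      Polynomial.C (Ideal.Quotient.mk _ b) := by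
  induction b using MvPolynomial.induction_on with
  | C a =>
      rw [G_C, Fbar_mk, F_C]
  | add p q ihp ihq =>
      rw [map_add, map_add, ihp, ihq, map_add, map_add]
  | mul_X p v ih =>
      rw [map_mul, map_mul, ih, show Gmap0 Iid n (X v) = gvar Iid n v from aeval_X _ v,
        FG_var Iid n hn hev, map_mul, map_mul]

lemma comp_FG :
    (Fbar Iid n hn hev).comp (Gm Iid n hn hev) = AlgHom.id W _ := by
  apply AlgHom.ext
  intro p
  induction p using Polynomial.induction_on with
  | C a =>
      obtain ⟨b, rfl⟩ := Ideal.Quotient.mk_surjective a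
      simp only [AlgHom.comp_apply, AlgHom.id_apply, Gm, Polynomial.aevalTower_C]
      rw [Gbar_mk, FG_all]
  | add p q ihp ihq =>
      simp only [AlgHom.comp_apply, AlgHom.id_apply, map_add] at ihp ihq ⊢
      rw [ihp, ihq]
  | monomial m a ih =>
      simp only [AlgHom.comp_apply, AlgHom.id_apply] at ih ⊢
      rw [pow_succ, ← mul_assoc, map_mul, map_mul, ih, show Gm Iid n hn hev Polynomial.X =
        Ideal.Quotient.mk _ (Xv W (rr n)) from Polynomial.aevalTower_X _ _,
        Fbar_mk, F_X]

lemma comp_GF :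
    (Gm Iid n hn hev).comp (Fbar Iid n hn hev) = AlgHom.id W _ := by
  apply Ideal.Quotient.algHom_ext
  apply MvPolynomial.algHom_ext
  intro v
  simp only [AlgHom.comp_apply, Ideal.Quotient.mkₐ_eq_mk, AlgHom.id_apply]
  rw [Fbar_mk, show Fmap Iid n (X v) = fvar Iid n v from aeval_X _ v]
  rcases v with p | u | p | p
  · show Gm Iid n hn hev (Polynomial.C (Ideal.Quotient.mk _ (Pv W (rr (n - 1)) p.1))) = _
    rw [Gm, Polynomial.aevalTower_C, Gbar_mk, G_P Iid n (rr_eq n hn hev)]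
    congr 1
    unfold Pv
    rw [dif_pos p.2]
  · show Gm Iid n hn hev Polynomial.X = _
    rw [Gm, Polynomial.aevalTower_X]
    rfl
  · show Gm Iid n hn hev (Polynomial.C (Ideal.Quotient.mk _ (Bv W (rr (n - 1)) p.1))) = _
    rw [Gm, Polynomial.aevalTower_C, Gbar_mk, G_B Iid n (rr_eq n hn hev)]
    congr 1
    unfold Bv
    rw [dif_pos p.2]
  · show Gm Iid n hn hev (Polynomial.C (Ideal.Quotient.mk _ (Tv W (rr (n - 1)) p.1))) = _
    rw [Gm, Polynomial.aevalTower_C, Gbar_mk, G_T Iid n (rr_eq n hn hev)]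
    congr 1
    unfold Tv
    rw [dif_pos p.2]

end L318
namespace L318
variable {W : Type} [CommRing W] (n : ℕ)

lemma Phi_X : Phi W n (X v) = phiVar W n v := aeval_X _ v

lemma Phi_P (hn : 2 ≤ n) (hev : n % 2 = 0) (i : ℕ) : Phi W n (Pv W (rr n) i) = Pv W (rr (n - 1)) i := by
  have h := rr_eq n hn hev
  by_cases hc : 1 ≤ i ∧ i ≤ rr n
  · rw [show Pv W (rr n) i = X (Sum.inl ⟨i, hc⟩) from by unfold Pv; rw [dif_pos hc],
      Phi_X]
    show (if n % 2 = 1 ∧ i = (n - 1) / 2 then _ else _) = _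
    rw [if_neg (fun hcon => by omega)]
  · unfold Pv
    rw [dif_neg hc, dif_neg (by rw [← h]; exact hc), map_zero]

lemma Phi_B (hn : 2 ≤ n) (hev : n % 2 = 0) (J : Finset ℕ) : Phi W n (Bv W (rr n) J) = Bv W (rr (n - 1)) J := by
  have h := rr_eq n hn hev
  by_cases hc : J ⊆ Finset.Icc 1 (rr n) ∧ J.Nonempty
  · rw [show Bv W (rr n) J = X (Sum.inr (Sum.inr (Sum.inl ⟨J, hc⟩))) from by
      unfold Bv; rw [dif_pos hc], Phi_X]
    show (if n % 2 = 1 ∧ (n - 1) / 2 ∈ J then _ else _) = _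
    rw [if_neg (fun hcon => by omega)]
  · unfold Bv
    rw [dif_neg hc, dif_neg (by rw [← h]; exact hc), map_zero]

lemma Phi_T (hn : 2 ≤ n) (hev : n % 2 = 0) (J : Finset ℕ) : Phi W n (Tv W (rr n) J) = Tv W (rr (n - 1)) J := by
  have h := rr_eq n hn hev
  by_cases hc : J ⊆ Finset.Icc 1 (rr n)
  · rw [show Tv W (rr n) J = X (Sum.inr (Sum.inr (Sum.inr ⟨J, hc⟩))) from by
      unfold Tv; rw [dif_pos hc], Phi_X]
    show (if n % 2 = 1 ∧ (n - 1) / 2 ∈ J then _ else _) = _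
    rw [if_neg (fun hcon => by omega)]
  · unfold Tv
    rw [dif_neg hc, dif_neg (by rw [← h]; exact hc), map_zero]

lemma Phi_surj (hn : 2 ≤ n) (hev : n % 2 = 0) (Iid : Ideal W) :
    ∀ b : Rg W (rr (n - 1)), ∃ f : Rg W (rr n),
      Ideal.Quotient.mk (relIdeal W Iid (n - 1)) (Phi W n f) =
        Ideal.Quotient.mk (relIdeal W Iid (n - 1)) b := by
  intro b
  induction b using MvPolynomial.induction_on with
  | C a =>
      exact ⟨C a, by rw [show Phi W n (C a) = C a from by
        simp [Phi, MvPolynomial.algebraMap_eq]]⟩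
  | add p q ihp ihq =>
      obtain ⟨f, hf⟩ := ihp; obtain ⟨g, hg⟩ := ihq
      exact ⟨f + g, by rw [map_add, map_add, hf, hg, map_add]⟩
  | mul_X p v ih =>
      obtain ⟨f, hf⟩ := ih
      have step : ∀ g : Rg W (rr n),
          Ideal.Quotient.mk (relIdeal W Iid (n - 1)) (Phi W n g) =
            Ideal.Quotient.mk (relIdeal W Iid (n - 1)) (X v : Rg W (rr (n - 1))) →
          ∃ f' : Rg W (rr n), Ideal.Quotient.mk (relIdeal W Iid (n - 1)) (Phi W n f') =
            Ideal.Quotient.mk (relIdeal W Iid (n - 1)) (p * X v) := by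
        intro g hg
        refine ⟨f * g, ?_⟩
        rw [map_mul, map_mul, hf, hg, map_mul]
      rcases v with pp | u | pp | pp
      · refine step (Pv W (rr n) pp.1) ?_
        rw [Phi_P n hn hev]
        congr 1
        unfold Pv
        rw [dif_pos pp.2]
      · refine step (Tv W (rr n) (kset n)) ?_
        rw [Phi_T n hn hev]
        exact (Ideal.Quotient.eq.2 (Ideal.subset_span (rel2_mem Iid n hn hev))).symm
      · refine step (Bv W (rr n) pp.1) ?_
        rw [Phi_B n hn hev]
        congr 1
        unfold Bv
        rw [dif_pos pp.2]
      · refine step (Tv W (rr n) pp.1) ?_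
        rw [Phi_T n hn hev]
        congr 1
        unfold Tv
        rw [dif_pos pp.2]

end L318
/-- Lemma 3.18: for even `n ≥ 2` there is a `W`-algebra isomorphism
`R_n/I_n ≅ (R_{n−1}/I_{n−1})[X]` sending the class of `X` to the polynomial variable and
the class of each variable `P_i`, `B_J`, `T_J` to the class of the same-named variable
(note `r(n) = r(n−1)` for `n` even); moreover `Φ̄_n : R_n/I_n → R_{n−1}/I_{n−1}`
is surjective. -/
theorem even_case_polynomial (W : Type) [CommRing W] (Iid : Ideal W) (n : ℕ)
    (hn : 2 ≤ n) (hev : n % 2 = 0) :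
    (∃ e : (Rg W (rr n) ⧸ relIdeal W Iid n) ≃ₐ[W]
        Polynomial (Rg W (rr (n - 1)) ⧸ relIdeal W Iid (n - 1)),
      e (Ideal.Quotient.mk (relIdeal W Iid n) (Xv W (rr n))) = Polynomial.X ∧
      (∀ i : ℕ, 1 ≤ i → i ≤ rr n →
        e (Ideal.Quotient.mk (relIdeal W Iid n) (Pv W (rr n) i)) =
          Polynomial.C (Ideal.Quotient.mk (relIdeal W Iid (n - 1)) (Pv W (rr (n - 1)) i))) ∧
      (∀ J : Finset ℕ, J ⊆ Finset.Icc 1 (rr n) →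
        e (Ideal.Quotient.mk (relIdeal W Iid n) (Bv W (rr n) J)) =
          Polynomial.C (Ideal.Quotient.mk (relIdeal W Iid (n - 1)) (Bv W (rr (n - 1)) J)) ∧
        e (Ideal.Quotient.mk (relIdeal W Iid n) (Tv W (rr n) J)) =
          Polynomial.C (Ideal.Quotient.mk (relIdeal W Iid (n - 1)) (Tv W (rr (n - 1)) J)))) ∧
    Function.Surjective
      (fun f : Rg W (rr n) => Ideal.Quotient.mk (relIdeal W Iid (n - 1)) (Phi W n f)) := by
  have h := L318.rr_eq n hn hev
  constructor
  · have hap : ∀ x, (AlgEquiv.ofAlgHom (L318.Fbar Iid n hn hev) (L318.Gm Iid n hn hev)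
        (L318.comp_FG Iid n hn hev) (L318.comp_GF Iid n hn hev)) x =
        L318.Fbar Iid n hn hev x := fun _ => rfl
    refine ⟨AlgEquiv.ofAlgHom (L318.Fbar Iid n hn hev) (L318.Gm Iid n hn hev)
      (L318.comp_FG Iid n hn hev) (L318.comp_GF Iid n hn hev), ?_, ?_, ?_⟩
    · rw [hap, L318.Fbar_mk, L318.F_X]
    · intro i _ _
      rw [hap, L318.Fbar_mk, L318.F_P Iid n h]
    · intro J _
      constructor
      · rw [hap, L318.Fbar_mk, L318.F_B Iid n h]
      · rw [hap, L318.Fbar_mk, L318.F_T Iid n h]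
  · intro q
    obtain ⟨b, rfl⟩ := Ideal.Quotient.mk_surjective q
    exact L318.Phi_surj n hn hev Iid b
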